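/- Let p ∈ [1,2]. The Macphail constant of ℓ_p is zero: for every δ > 0 there exist a positive integer n and vectors x_1,…,x_n in ℓ_p, not all zero, such that sup{ ‖∑_{i∈σ} x_i‖_p : σ ⊆ {1,…,n} } < δ · ∑_{i=1}^{n} ‖x_i‖_p. In particular μ(ℓ_1) = 0. -/

import Mathlib

open scoped ENNReal symmDiff

/-- Orthogonality of Rademacher signs. -/
lemma rademacher_sq_sum (m : ℕ) (σ : Finset (Fin m)) :
    ∑ s : Finset (Fin m), (∑ i ∈ σ, (if i ∈ s then (1:ℝ) else -1)) ^ 2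
      = 2 ^ m * σ.card := by
  classical
  have key : ∀ i j : Fin m, i ≠ j →
      ∑ s : Finset (Fin m), (if i ∈ s then (1:ℝ) else -1) * (if j ∈ s then (1:ℝ) else -1) = 0 := by
    intro i j hij
    set h : Finset (Fin m) → ℝ := fun s =>
      (if i ∈ s then (1:ℝ) else -1) * (if j ∈ s then (1:ℝ) else -1) with hh
    have e : ∀ s : Finset (Fin m), h (s ∆ {i}) = - h s := by
      intro s
      have hi : (i ∈ s ∆ {i}) ↔ i ∉ s := by simp [Finset.mem_symmDiff]
      have hjj : (j ∈ s ∆ {i}) ↔ j ∈ s := by simp [Finset.mem_symmDiff, hij.symm]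
      by_cases h1 : i ∈ s <;> by_cases h2 : j ∈ s <;> simp [hh, hi, hjj, h1, h2]
    have inv : Function.Involutive (fun s : Finset (Fin m) => s ∆ ({i} : Finset (Fin m))) :=
      fun s => symmDiff_symmDiff_cancel_right {i} s
    have : ∑ s : Finset (Fin m), h s = ∑ s : Finset (Fin m), h (s ∆ {i}) :=
      (Fintype.sum_equiv inv.toPerm _ _ (fun s => rfl)).symm
    have t2 : ∑ s : Finset (Fin m), h (s ∆ {i}) = - ∑ s : Finset (Fin m), h s := by
      simp only [e, Finset.sum_neg_distrib]
    linarith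
  calc ∑ s : Finset (Fin m), (∑ i ∈ σ, (if i ∈ s then (1:ℝ) else -1)) ^ 2
      = ∑ s : Finset (Fin m), ∑ i ∈ σ, ∑ j ∈ σ,
          (if i ∈ s then (1:ℝ) else -1) * (if j ∈ s then (1:ℝ) else -1) := by
        refine Finset.sum_congr rfl fun s _ => ?_
        rw [sq, Finset.sum_mul_sum]
    _ = ∑ i ∈ σ, ∑ j ∈ σ, ∑ s : Finset (Fin m),
          (if i ∈ s then (1:ℝ) else -1) * (if j ∈ s then (1:ℝ) else -1) := by
        rw [Finset.sum_comm]
        refine Finset.sum_congr rfl fun i _ => Finset.sum_comm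
    _ = ∑ i ∈ σ, (2:ℝ) ^ m := by
        refine Finset.sum_congr rfl fun i hi => ?_
        rw [Finset.sum_eq_single_of_mem i hi]
        · have : ∀ s : Finset (Fin m),
              (if i ∈ s then (1:ℝ) else -1) * (if i ∈ s then (1:ℝ) else -1) = 1 := by
            intro s; by_cases h : i ∈ s <;> simp [h]
          simp only [this, Finset.sum_const, Finset.card_univ, Fintype.card_finset,
            Fintype.card_fin, nsmul_eq_mul, mul_one, Nat.cast_pow, Nat.cast_ofNat]
        · intro j _ hji; exact key i j (Ne.symm hji)
    _ = 2 ^ m * σ.card := by rw [Finset.sum_const, nsmul_eq_mul, mul_comm]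

lemma lp_single_sum (p : ℝ≥0∞) (n : ℕ) {ι : Type*} (σ : Finset ι) (f : ι → ℝ) :
    lp.single (E := fun _ : ℕ => ℝ) p n (∑ i ∈ σ, f i)
      = ∑ i ∈ σ, lp.single (E := fun _ : ℕ => ℝ) p n (f i) := by
  apply lp.ext
  funext j
  simp only [lp.coeFn_sum, Finset.sum_apply, lp.single_apply, Pi.single_apply]
  split_ifs with h
  · subst h; simp
  · simp
open scoped ENNReal symmDiff

set_option maxHeartbeats 1000000 in
/-- **Macphail's theorem for `ℓ_p`, `1 ≤ p ≤ 2` (in particular `μ(ℓ_1) = 0`).**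
For every `δ > 0` there are finitely many vectors `x_1, …, x_n` in `ℓ_p`, not all
zero, with `sup_{σ ⊆ {1,…,n}} ‖∑_{i∈σ} x_i‖ < δ · ∑_{i=1}^n ‖x_i‖`; that is, the
Macphail constant of `ℓ_p` is zero. -/
theorem macphail_constant_lp_eq_zero
    (p : ℝ≥0∞) [Fact (1 ≤ p)] (hp2 : p ≤ 2) (δ : ℝ) (hδ : 0 < δ) :
    ∃ (n : ℕ) (_ : 0 < n) (x : Fin n → lp (fun _ : ℕ => ℝ) p),
      (∃ i, x i ≠ 0) ∧
      ∀ σ : Finset (Fin n), ‖∑ i ∈ σ, x i‖ < δ * ∑ i : Fin n, ‖x i‖ := by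
  classical
  have hp1 : (1:ℝ≥0∞) ≤ p := Fact.out
  have hpt : p ≠ ⊤ := ne_top_of_le_ne_top (by norm_num) hp2
  set q := p.toReal with hq
  have hq1 : 1 ≤ q := by
    rw [hq, ← ENNReal.toReal_one]
    exact ENNReal.toReal_mono hpt hp1
  have hq0 : (0:ℝ) < q := lt_of_lt_of_le one_pos hq1
  have hq2 : q ≤ 2 := by
    have h2 : ((2:ℝ≥0∞)).toReal = 2 := by simp
    rw [hq, ← h2]
    exact ENNReal.toReal_mono (by norm_num) hp2
  -- choose the dimension m
  set m : ℕ := ⌈δ⁻¹ ^ 2⌉₊ + 1 with hm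
  have hm0 : 0 < m := Nat.succ_pos _
  have hmδ : δ⁻¹ ^ 2 < (m:ℝ) := by
    calc δ⁻¹ ^ 2 ≤ (⌈δ⁻¹ ^ 2⌉₊ : ℝ) := Nat.le_ceil _
      _ < m := by exact_mod_cast Nat.lt_succ_self _
  have hmR : (0:ℝ) < m := Nat.cast_pos.mpr hm0
  have sqrt_lt : Real.sqrt m < δ * m := by
    have hs := Real.sq_sqrt hmR.le
    have hs0 : 0 < Real.sqrt (m:ℝ) := Real.sqrt_pos.mpr hmR
    have h1 : δ⁻¹ < Real.sqrt m := by
      rw [show (δ⁻¹ : ℝ) = Real.sqrt (δ⁻¹ ^ 2) by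
            rw [Real.sqrt_sq (by positivity)]]
      exact Real.sqrt_lt_sqrt (by positivity) hmδ
    have h2 : 1 < δ * Real.sqrt m := by
      rw [← inv_lt_iff_one_lt_mul₀' hδ] at *
      exact h1
    nlinarith [hs, hs0, h2]
  -- the construction
  set enc : Finset (Fin m) → ℕ := Encodable.encode with henc
  have henc_inj : Function.Injective enc := Encodable.encode_injective
  set ε : Finset (Fin m) → Fin m → ℝ := fun s i => if i ∈ s then 1 else -1 with hε
  set c : ℝ := ((2:ℝ) ^ m) ^ (-(1/q)) with hc
  have hc0 : 0 < c := Real.rpow_pos_of_pos (by positivity) _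
  have hcq : c ^ q = ((2:ℝ) ^ m)⁻¹ := by
    rw [hc, ← Real.rpow_mul (by positivity)]
    rw [show (-(1/q)) * q = -1 by field_simp]
    exact Real.rpow_neg_one _
  set g : Fin m → Finset (Fin m) → ℝ := fun i s => c * ε s i with hg
  set T : Finset ℕ := Finset.image enc Finset.univ with hT
  set f : Fin m → ℕ → ℝ := fun i => Function.extend enc (g i) 0 with hfdef
  have hf : ∀ i s, f i (enc s) = g i s := fun i s => henc_inj.extend_apply _ _ _
  set x : Fin m → lp (fun _ : ℕ => ℝ) p := fun i => ∑ n ∈ T, lp.single p n (f i n) with hx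
  have card2 : (Finset.univ : Finset (Finset (Fin m))).card = 2 ^ m := by
    simp [Finset.card_univ, Fintype.card_finset]
  -- norm of each vector
  have hnorm_pow : ∀ i, ‖x i‖ ^ q = 1 := by
    intro i
    have h1 := lp.norm_sum_single (E := fun _ : ℕ => ℝ) (p := p) hq0 (f i) T
    rw [hx] at *
    rw [h1, hT, Finset.sum_image (fun a _ b _ h => henc_inj h)]
    have hgs : ∀ s : Finset (Fin m), ‖g i s‖ = c := by
      intro s
      by_cases h : i ∈ s <;>
        simp [hg, hε, h, abs_of_pos hc0]
    calc ∑ s : Finset (Fin m), ‖f i (enc s)‖ ^ q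
        = ∑ s : Finset (Fin m), c ^ q := by
          refine Finset.sum_congr rfl fun s _ => ?_
          rw [hf, hgs]
      _ = 1 := by
          rw [Finset.sum_const, card2, nsmul_eq_mul, hcq]
          push_cast
          field_simp
  have hnorm : ∀ i, ‖x i‖ = 1 := by
    intro i
    have := congrArg (fun t : ℝ => t ^ q⁻¹) (hnorm_pow i)
    simpa [Real.rpow_rpow_inv (norm_nonneg _) hq0.ne', Real.one_rpow] using this
  have hsum_norm : ∑ i : Fin m, ‖x i‖ = m := by simp [hnorm]
  -- the key bound for subsets
  have key : ∀ σ : Finset (Fin m), ‖∑ i ∈ σ, x i‖ ≤ Real.sqrt m := by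
    intro σ
    set S : Finset (Fin m) → ℝ := fun s => ∑ i ∈ σ, ε s i with hS
    have hswap : ∑ i ∈ σ, x i = ∑ n ∈ T, lp.single p n (∑ i ∈ σ, f i n) := by
      rw [hx]
      rw [Finset.sum_comm]
      exact Finset.sum_congr rfl fun n _ => (lp_single_sum p n σ _).symm
    have hpow : ‖∑ i ∈ σ, x i‖ ^ q = ∑ s : Finset (Fin m), ((2:ℝ)^m)⁻¹ * |S s| ^ q := by
      rw [hswap, lp.norm_sum_single (E := fun _ : ℕ => ℝ) (p := p) hq0 _ T, hT,
        Finset.sum_image (fun a _ b _ h => henc_inj h)]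
      refine Finset.sum_congr rfl fun s _ => ?_
      have : ∑ i ∈ σ, f i (enc s) = c * S s := by
        simp only [hf, hg, hS, Finset.mul_sum]
      rw [this, Real.norm_eq_abs, abs_mul, abs_of_pos hc0,
        Real.mul_rpow hc0.le (abs_nonneg _), hcq]
    have hsq : ∑ s : Finset (Fin m), (S s) ^ 2 = 2 ^ m * σ.card := by
      simpa [hS, hε] using rademacher_sq_sum m σ
    set B : ℝ := ∑ s : Finset (Fin m), ((2:ℝ)^m)⁻¹ * |S s| ^ q with hB
    have hB0 : 0 ≤ B := Finset.sum_nonneg fun s _ => by positivity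
    have hmean : B ^ (2/q) ≤ (σ.card : ℝ) := by
      have := Real.rpow_arith_mean_le_arith_mean_rpow (Finset.univ : Finset (Finset (Fin m)))
        (fun _ => ((2:ℝ)^m)⁻¹) (fun s => |S s| ^ q)
        (fun s _ => by positivity)
        (by rw [Finset.sum_const, card2, nsmul_eq_mul]; push_cast; field_simp)
        (fun s _ => by positivity)
        (show (1:ℝ) ≤ 2/q by rw [le_div_iff₀ hq0]; linarith)
      refine le_trans this (le_of_eq ?_)
      have hz : ∀ s : Finset (Fin m), (|S s| ^ q) ^ (2/q) = (S s) ^ 2 := by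
        intro s
        rw [← Real.rpow_mul (abs_nonneg _), ← sq_abs (S s),
          ← Real.rpow_natCast |S s| 2]
        congr 1
        push_cast
        field_simp
      calc ∑ s : Finset (Fin m), ((2:ℝ)^m)⁻¹ * (|S s| ^ q) ^ (2/q)
          = ((2:ℝ)^m)⁻¹ * ∑ s : Finset (Fin m), (S s)^2 := by
            rw [Finset.mul_sum]
            exact Finset.sum_congr rfl fun s _ => by rw [hz]
        _ = (σ.card : ℝ) := by rw [hsq]; field_simp
    have hBle : B ≤ (m:ℝ) ^ (q/2) := by
      have hcard : (σ.card : ℝ) ≤ m := by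
        exact_mod_cast le_trans (Finset.card_le_card (Finset.subset_univ σ))
          (le_of_eq (by simp))
      have h2 : B ^ (2/q) ≤ (m:ℝ) := le_trans hmean hcard
      have h3 : (B ^ (2/q)) ^ (q/2) ≤ (m:ℝ) ^ (q/2) :=
        Real.rpow_le_rpow (Real.rpow_nonneg hB0 _) h2 (by positivity)
      rwa [← Real.rpow_mul hB0, show (2/q) * (q/2) = 1 by field_simp, Real.rpow_one] at h3
    have : ‖∑ i ∈ σ, x i‖ ^ q ≤ (Real.sqrt m) ^ q := by
      rw [hpow]
      refine le_trans hBle (le_of_eq ?_)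
      rw [Real.sqrt_eq_rpow, ← Real.rpow_mul hmR.le]
      congr 1
      ring
    exact (Real.rpow_le_rpow_iff (norm_nonneg _) (Real.sqrt_nonneg _) hq0).mp this
  -- nonvanishing
  have hne : x ⟨0, hm0⟩ ≠ 0 := by
    intro h0
    have h1 := hnorm ⟨0, hm0⟩
    rw [h0, norm_zero] at h1
    exact one_ne_zero h1.symm
  refine ⟨m, hm0, x, ⟨⟨0, hm0⟩, hne⟩, fun σ => ?_⟩
  rw [hsum_norm]
  exact lt_of_le_of_lt (key σ) sqrt_lt
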